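/- The Cartesian product of r−1 copies of the complete graph K_q (with q ≥ 2, r ≥ 2) is an (r−1)(q−1)-regular graph that is (r−1)(q−1)-connected. -/

import Mathlib

/-- The Cartesian product of `n` copies of `K_q`: vertices are tuples in `[q]^n`,
adjacent iff they differ in exactly one coordinate. -/
def hammingGraph (n q : ℕ) : SimpleGraph (Fin n → Fin q) where
  Adj f g := ∃! j : Fin n, f j ≠ g j
  symm := ⟨by rintro f g ⟨j, hj, hu⟩; exact ⟨j, hj.symm, fun k hk => hu k hk.symm⟩⟩
  loopless := ⟨by rintro f ⟨j, hj, -⟩; exact hj rfl⟩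

/-- A graph is `k`-connected if it has more than `k` vertices and removing any
set of fewer than `k` vertices leaves it connected. -/
def GraphKConnected {V : Type} (G : SimpleGraph V) (k : ℕ) : Prop :=
  k < Nat.card V ∧
    ∀ S : Set V, S.Finite → S.ncard < k → (G.induce Sᶜ).Connected

lemma ham_deg {n q : ℕ} (hq : 1 ≤ q) (v : Fin n → Fin q) :
    {w | (hammingGraph n q).Adj v w}.ncard = n * (q - 1) := by
  classical
  have hset : {w | (hammingGraph n q).Adj v w}
      = (fun p : Fin n × Fin q => Function.update v p.1 p.2) '' {p | p.2 ≠ v p.1} := by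
    ext w
    constructor
    · rintro ⟨j, hj, hu⟩
      refine ⟨⟨j, w j⟩, Ne.symm hj, ?_⟩
      funext k
      by_cases hk : k = j
      · subst hk; simp [Function.update]
      · have : v k = w k := by
          by_contra hne
          exact hk (hu k hne)
        simp [Function.update, hk, this]
    · rintro ⟨⟨j, c⟩, hc, rfl⟩
      refine ⟨j, by simpa using Ne.symm hc, ?_⟩
      intro k hk
      by_contra hkj
      exact hk (by simp [Function.update, hkj])
  rw [hset]
  have hinj : Set.InjOn (fun p : Fin n × Fin q => Function.update v p.1 p.2) {p | p.2 ≠ v p.1} := by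
    rintro ⟨j, c⟩ hjc ⟨j', c'⟩ hj'c' h
    simp only [Set.mem_setOf_eq] at hjc hj'c'
    by_cases hjj : j = j'
    · subst hjj
      have := congrFun h j
      simp [Function.update] at this
      simp [this]
    · have h1 : Function.update v j c j = Function.update v j' c' j := congrFun h j
      rw [Function.update_self, Function.update_of_ne hjj] at h1
      exact absurd h1 hjc
  rw [Set.ncard_image_of_injOn hinj]
  have hcompl : {p : Fin n × Fin q | p.2 ≠ v p.1} = {p : Fin n × Fin q | p.2 = v p.1}ᶜ := by
    ext p; simp
  have hdiag : {p : Fin n × Fin q | p.2 = v p.1} = Set.range (fun j => (j, v j)) := by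
    ext ⟨j, c⟩
    simp only [Set.mem_setOf_eq, Set.mem_range, Prod.mk.injEq]
    constructor
    · rintro rfl; exact ⟨j, rfl, rfl⟩
    · rintro ⟨j', rfl, rfl⟩; rfl
  have hd : {p : Fin n × Fin q | p.2 = v p.1}.ncard = n := by
    have hinj2 : Function.Injective (fun j : Fin n => (j, v j)) := by
      intro a b hab
      simpa using congrArg Prod.fst hab
    rw [hdiag, ← Set.image_univ, Set.ncard_image_of_injective _ hinj2, Set.ncard_univ]
    simp [Nat.card_eq_fintype_card]
  have htot : Nat.card (Fin n × Fin q) = n * q := by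
    simp [Nat.card_eq_fintype_card]
  rw [hcompl]
  have := Set.ncard_add_ncard_compl {p : Fin n × Fin q | p.2 = v p.1}
  rw [hd, htot] at this
  have hsplit : n * q = n * (q - 1) + n := by
    have hq' : q - 1 + 1 = q := by omega
    calc n * q = n * ((q-1)+1) := by rw [hq']
      _ = n * (q-1) + n := by ring
  omega


namespace HamAux

variable {n q : ℕ}

/-- the slice of `S` at last coordinate `a`, as a set of `n`-tuples -/
def lset (S : Set (Fin (n+1) → Fin q)) (a : Fin q) : Set (Fin n → Fin q) :=
  (fun x => Fin.snoc x a) ⁻¹' S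

lemma mem_lset {S : Set (Fin (n+1) → Fin q)} {a : Fin q} {x : Fin n → Fin q} :
    x ∈ lset S a ↔ Fin.snoc x a ∈ S := Iff.rfl

lemma cross_adj {x : Fin n → Fin q} {a b : Fin q} (hab : a ≠ b) :
    (hammingGraph (n+1) q).Adj (Fin.snoc x a) (Fin.snoc x b) := by
  refine ⟨Fin.last n, by simpa using hab, ?_⟩
  intro k hk
  induction k using Fin.lastCases with
  | last => rfl
  | cast i => simp at hk

lemma snoc_adj {x y : Fin n → Fin q} {a : Fin q} (h : (hammingGraph n q).Adj x y) :
    (hammingGraph (n+1) q).Adj (Fin.snoc x a) (Fin.snoc y a) := by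
  obtain ⟨j, hj, hu⟩ := h
  refine ⟨j.castSucc, by simpa using hj, ?_⟩
  intro k hk
  induction k using Fin.lastCases with
  | last => simp at hk
  | cast i =>
      simp only [Fin.snoc_castSucc] at hk
      exact congrArg Fin.castSucc (hu i hk)

/-- graph hom from the induced slice graph into the induced big graph -/
def layerHom (S : Set (Fin (n+1) → Fin q)) (a : Fin q) :
    ((hammingGraph n q).induce (lset S a)ᶜ) →g ((hammingGraph (n+1) q).induce Sᶜ) where
  toFun p := ⟨Fin.snoc p.1 a, p.2⟩
  map_rel' := by
    intro p p' h
    simp only [SimpleGraph.comap_adj, Function.Embedding.coe_subtype] at h ⊢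
    exact snoc_adj h

lemma layer_reach
    (hIH : ∀ T : Set (Fin n → Fin q), T.ncard < n * (q-1) →
      ∀ u v : (Tᶜ : Set _), ((hammingGraph n q).induce Tᶜ).Reachable u v)
    (S : Set (Fin (n+1) → Fin q)) (a : Fin q) (h : (lset S a).ncard < n * (q-1))
    {x y : Fin n → Fin q} (hx : Fin.snoc x a ∉ S) (hy : Fin.snoc y a ∉ S) :
    ((hammingGraph (n+1) q).induce Sᶜ).Reachable ⟨Fin.snoc x a, hx⟩ ⟨Fin.snoc y a, hy⟩ :=
  (hIH (lset S a) h ⟨x, hx⟩ ⟨y, hy⟩).map (layerHom S a)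

/-- snoc image of a slice, for counting -/
lemma image_snoc_lset (S : Set (Fin (n+1) → Fin q)) (a : Fin q) :
    (fun x : Fin n → Fin q => Fin.snoc x a) '' (lset S a)
      = {w ∈ S | w (Fin.last n) = a} := by
  ext w
  constructor
  · rintro ⟨x, hx, rfl⟩
    exact ⟨hx, by simp⟩
  · rintro ⟨hw, hlast⟩
    refine ⟨Fin.init w, ?_, ?_⟩
    · show Fin.snoc (Fin.init w) a ∈ S
      rw [← hlast, Fin.snoc_init_self]; exact hw
    · show Fin.snoc (Fin.init w) a = w
      rw [← hlast, Fin.snoc_init_self]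

lemma snoc_injective (a : Fin q) :
    Function.Injective (fun x : Fin n → Fin q => (Fin.snoc x a : Fin (n+1) → Fin q)) := by
  intro x y h
  funext i
  have h2 := congrFun h i.castSucc
  simpa using h2

lemma sum_lset (S : Set (Fin (n+1) → Fin q)) :
    ∑ a : Fin q, (lset S a).ncard = S.ncard := by
  classical
  have e : (Σ a : Fin q, (lset S a : Set _)) ≃ (S : Set _) :=
    { toFun := fun p => ⟨Fin.snoc p.2.1 p.1, p.2.2⟩
      invFun := fun w => ⟨w.1 (Fin.last n), ⟨Fin.init w.1, by
        show Fin.snoc (Fin.init w.1) (w.1 (Fin.last n)) ∈ S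
        rw [Fin.snoc_init_self]; exact w.2⟩⟩
      left_inv := by
        rintro ⟨a, x, hx⟩
        refine Sigma.subtype_ext ?_ ?_
        · simp
        · simp
      right_inv := by
        rintro ⟨w, hw⟩
        exact Subtype.ext (Fin.snoc_init_self w) }
  have h1 : Nat.card (Σ a : Fin q, (lset S a : Set _)) = Nat.card (S : Set _) :=
    Nat.card_congr e
  rw [Nat.card_eq_fintype_card, Fintype.card_sigma] at h1
  calc ∑ a : Fin q, (lset S a).ncard
      = ∑ a : Fin q, Fintype.card (lset S a : Set _) := by
        refine Finset.sum_congr rfl fun a _ => ?_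
        rw [← Nat.card_coe_set_eq, Nat.card_eq_fintype_card]
    _ = Nat.card (S : Set _) := h1
    _ = S.ncard := Nat.card_coe_set_eq S


lemma induce_adj_iff {V : Type*} (G : SimpleGraph V) (s : Set V) (u v : s) :
    (G.induce s).Adj u v ↔ G.Adj u v := by simp [SimpleGraph.comap_adj]

lemma card_V (n q : ℕ) : Nat.card (Fin n → Fin q) = q ^ n := by
  simp [Nat.card_eq_fintype_card]

lemma compl_nonempty {α : Type*} [Fintype α] {S : Set α} (h : S.ncard < Nat.card α) :
    Sᶜ.Nonempty := by
  rw [Set.nonempty_iff_ne_empty]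
  intro hemp
  rw [Set.compl_empty_iff] at hemp
  subst hemp
  rw [Set.ncard_univ] at h
  omega

lemma pair_le (f : Fin q → ℕ) {a b : Fin q} (h : a ≠ b) : f a + f b ≤ ∑ x, f x := by
  classical
  have hsub := Finset.sum_le_sum_of_subset (Finset.subset_univ ({a, b} : Finset (Fin q))) (f := f)
  rwa [Finset.sum_pair h] at hsub

lemma triple_le (f : Fin q → ℕ) {a b c : Fin q} (hab : a ≠ b) (hac : a ≠ c) (hbc : b ≠ c) :
    f a + f b + f c ≤ ∑ x, f x := by
  classical
  have hsub := Finset.sum_le_sum_of_subset (Finset.subset_univ ({a, b, c} : Finset (Fin q))) (f := f)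
  rw [Finset.sum_insert (by simp [hab, hac]), Finset.sum_insert (by simp [hbc]),
    Finset.sum_singleton] at hsub
  omega

lemma base_reach (q : ℕ) (S : Set (Fin 1 → Fin q)) (u v : (Sᶜ : Set _)) :
    ((hammingGraph 1 q).induce Sᶜ).Reachable u v := by
  by_cases h : u = v
  · subst h; rfl
  · apply SimpleGraph.Adj.reachable
    rw [induce_adj_iff]
    have hne : (u : Fin 1 → Fin q) ≠ (v : Fin 1 → Fin q) := fun he => h (Subtype.ext he)
    have hex : ∃ j : Fin 1, (u : Fin 1 → Fin q) j ≠ (v : Fin 1 → Fin q) j := by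
      by_contra hc
      push_neg at hc
      exact hne (funext hc)
    obtain ⟨j, hj⟩ := hex
    exact ⟨j, hj, fun k _ => Fin.ext (by omega)⟩


lemma free_pair (S : Set (Fin (n+1) → Fin q)) {a b : Fin q}
    (h : (lset S a).ncard + (lset S b).ncard < q ^ n) :
    ∃ x : Fin n → Fin q, Fin.snoc x a ∉ S ∧ Fin.snoc x b ∉ S := by
  have hcard : (lset S a ∪ lset S b).ncard < Nat.card (Fin n → Fin q) := by
    rw [card_V]
    exact lt_of_le_of_lt (Set.ncard_union_le _ _) h
  obtain ⟨x, hx⟩ := compl_nonempty hcard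
  simp only [Set.mem_compl_iff, Set.mem_union, not_or] at hx
  exact ⟨x, hx.1, hx.2⟩

lemma free_cross (S : Set (Fin (n+1) → Fin q)) {c : Fin q} (x : Fin n → Fin q)
    (h : S.ncard < (lset S c).ncard + (q - 1)) :
    ∃ b : Fin q, b ≠ c ∧ Fin.snoc x b ∉ S := by
  classical
  by_contra hcon
  push_neg at hcon
  set A : Set (Fin (n+1) → Fin q) :=
    (fun b : Fin q => (Fin.snoc x b : Fin (n+1) → Fin q)) '' {c}ᶜ with hA_def
  set B : Set (Fin (n+1) → Fin q) :=
    (fun z : Fin n → Fin q => (Fin.snoc z c : Fin (n+1) → Fin q)) '' lset S c with hB_def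
  have hAS : A ⊆ S := by
    rintro w ⟨b, hb, rfl⟩
    exact hcon b hb
  have hBS : B ⊆ S := by
    rintro w ⟨z, hz, rfl⟩
    exact hz
  have hdisj : Disjoint A B := by
    rw [Set.disjoint_left]
    rintro w ⟨b, hb, rfl⟩ ⟨z, hz, hzeq⟩
    apply hb
    have h1 := congrArg (fun f : Fin (n+1) → Fin q => f (Fin.last n)) hzeq
    simpa using h1.symm
  have hinjb : Function.Injective (fun b : Fin q => (Fin.snoc x b : Fin (n+1) → Fin q)) := by
    intro b b' hb
    have h1 := congrArg (fun f : Fin (n+1) → Fin q => f (Fin.last n)) hb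
    simpa using h1
  have hA : A.ncard = q - 1 := by
    rw [hA_def, Set.ncard_image_of_injective _ hinjb]
    have h1 := Set.ncard_add_ncard_compl ({c} : Set (Fin q))
    rw [Set.ncard_singleton, Nat.card_eq_fintype_card, Fintype.card_fin] at h1
    omega
  have hB : B.ncard = (lset S c).ncard :=
    Set.ncard_image_of_injective _ (snoc_injective c)
  have hle : A.ncard + B.ncard ≤ S.ncard := by
    rw [← Set.ncard_union_eq hdisj (Set.toFinite A) (Set.toFinite B)]
    exact Set.ncard_le_ncard (Set.union_subset hAS hBS) (Set.toFinite S)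
  omega


lemma arith_mul_le_pow {q n : ℕ} (hq : 2 ≤ q) (hn : 1 ≤ n) : n * q ≤ q ^ n := by
  have h1 : n ≤ 2 ^ (n - 1) := by
    have := Nat.lt_two_pow_self (n := n - 1); omega
  have h2 : (2:ℕ) ^ (n-1) ≤ q ^ (n-1) := Nat.pow_le_pow_left hq _
  calc n * q ≤ q ^ (n-1) * q := Nat.mul_le_mul_right q (h1.trans h2)
    _ = q ^ n := by rw [← pow_succ]; congr 1; omega

lemma main_reach (q : ℕ) (hq : 2 ≤ q) :
    ∀ n, 1 ≤ n → ∀ S : Set (Fin n → Fin q), S.ncard < n * (q-1) →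
      ∀ u v : (Sᶜ : Set _), ((hammingGraph n q).induce Sᶜ).Reachable u v := by
  intro n hn
  induction n, hn using Nat.le_induction with
  | base => intro S _ u v; exact base_reach q S u v
  | succ n hn IH =>
    intro S hS u v
    classical
    set sc : Fin q → ℕ := fun a => (lset S a).ncard with hsc_def
    have hsum : ∑ a, sc a = S.ncard := sum_lset S
    obtain ⟨a0, -, hmin⟩ := Finset.exists_min_image Finset.univ sc
      ⟨⟨0, by omega⟩, Finset.mem_univ _⟩
    have hq0 : q * sc a0 ≤ S.ncard := by
      have h1 : ∑ _a : Fin q, sc a0 ≤ ∑ a, sc a :=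
        Finset.sum_le_sum (fun b _ => hmin b (Finset.mem_univ b))
      rw [Finset.sum_const, Finset.card_univ, Fintype.card_fin, smul_eq_mul, hsum] at h1
      exact h1
    have hsplit1 : (n+1) * (q-1) = n*(q-1) + (q-1) := by ring
    have hmulpow : n * q ≤ q ^ n := arith_mul_le_pow hq hn
    have hsplitn : n * q = n*(q-1) + n := by
      have hq' : q - 1 + 1 = q := by omega
      calc n * q = n * ((q-1)+1) := by rw [hq']
        _ = n * (q-1) + n := by ring
    have hqle : q - 1 ≤ n * (q-1) := Nat.le_mul_of_pos_left _ (by omega)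
    have hqpow : q ≤ q ^ n := by
      calc q = q ^ 1 := (pow_one q).symm
        _ ≤ q ^ n := Nat.pow_le_pow_right (by omega) hn
    have ha0good : sc a0 < n * (q-1) := by
      by_contra hbad
      push_neg at hbad
      have h1 : q * (n*(q-1)) ≤ q * sc a0 := Nat.mul_le_mul_left q hbad
      have h2 : 2 * (n * (q-1)) ≤ q * (n*(q-1)) := Nat.mul_le_mul_right _ hq
      omega
    have ha0n : sc a0 ≤ n := by
      have h4 : (n+1)*(q-1) ≤ (n+1)*q := Nat.mul_le_mul_left _ (by omega)
      have h5 : (n+1) * q = q * (n+1) := mul_comm _ _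
      have h6 : q * sc a0 < q * (n+1) := by omega
      have := Nat.lt_of_mul_lt_mul_left h6
      omega
    have key : ∀ (x : Fin n → Fin q) (c : Fin q) (hw : Fin.snoc x c ∉ S),
        ∃ (z : Fin n → Fin q) (hz : Fin.snoc z a0 ∉ S),
          ((hammingGraph (n+1) q).induce Sᶜ).Reachable ⟨Fin.snoc x c, hw⟩ ⟨Fin.snoc z a0, hz⟩ := by
      intro x c hw
      by_cases hca : c = a0
      · subst hca; exact ⟨x, hw, SimpleGraph.Reachable.refl _⟩
      by_cases hcg : sc c < n * (q-1)
      · have hfree : sc c + sc a0 < q ^ n := by omega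
        obtain ⟨x', hx'c, hx'a0⟩ := free_pair S (a := c) (b := a0) hfree
        refine ⟨x', hx'a0, ?_⟩
        have r1 : ((hammingGraph (n+1) q).induce Sᶜ).Reachable
            ⟨Fin.snoc x c, hw⟩ ⟨Fin.snoc x' c, hx'c⟩ := layer_reach IH S c hcg hw hx'c
        have r2 : ((hammingGraph (n+1) q).induce Sᶜ).Reachable
            ⟨Fin.snoc x' c, hx'c⟩ ⟨Fin.snoc x' a0, hx'a0⟩ :=
          SimpleGraph.Adj.reachable ((induce_adj_iff _ _ _ _).mpr (cross_adj hca))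
        exact r1.trans r2
      · push_neg at hcg
        have hfc : S.ncard < sc c + (q - 1) := by omega
        obtain ⟨b, hbc, hxb⟩ := free_cross S x hfc
        have e1 : ((hammingGraph (n+1) q).induce Sᶜ).Reachable
            ⟨Fin.snoc x c, hw⟩ ⟨Fin.snoc x b, hxb⟩ :=
          SimpleGraph.Adj.reachable ((induce_adj_iff _ _ _ _).mpr (cross_adj (Ne.symm hbc)))
        by_cases hba : b = a0
        · subst hba; exact ⟨x, hxb, e1⟩
        · have hpair : sc b + sc c ≤ S.ncard := by
            rw [← hsum]; exact pair_le sc hbc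
          have hbgood : sc b < n * (q-1) := by omega
          have htrip : sc a0 + sc b + sc c ≤ S.ncard := by
            rw [← hsum]
            exact triple_le sc (fun h => hba h.symm) (fun h => hca h.symm) hbc
          have hfree2 : sc b + sc a0 < q ^ n := by omega
          obtain ⟨x', hx'b, hx'a0⟩ := free_pair S (a := b) (b := a0) hfree2
          have r2 : ((hammingGraph (n+1) q).induce Sᶜ).Reachable
              ⟨Fin.snoc x b, hxb⟩ ⟨Fin.snoc x' b, hx'b⟩ := layer_reach IH S b hbgood hxb hx'b
          have r3 : ((hammingGraph (n+1) q).induce Sᶜ).Reachable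
              ⟨Fin.snoc x' b, hx'b⟩ ⟨Fin.snoc x' a0, hx'a0⟩ :=
            SimpleGraph.Adj.reachable ((induce_adj_iff _ _ _ _).mpr (cross_adj hba))
          exact ⟨x', hx'a0, e1.trans (r2.trans r3)⟩
    rcases u with ⟨w, hw⟩
    rcases v with ⟨w', hw'⟩
    obtain ⟨x, c, rfl⟩ : ∃ x c, w = Fin.snoc x c :=
      ⟨Fin.init w, w (Fin.last n), (Fin.snoc_init_self w).symm⟩
    obtain ⟨x', c', rfl⟩ : ∃ x c, w' = Fin.snoc x c :=
      ⟨Fin.init w', w' (Fin.last n), (Fin.snoc_init_self w').symm⟩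
    obtain ⟨z, hz, r⟩ := key x c hw
    obtain ⟨z', hz', r'⟩ := key x' c' hw'
    have rmid : ((hammingGraph (n+1) q).induce Sᶜ).Reachable
        ⟨Fin.snoc z a0, hz⟩ ⟨Fin.snoc z' a0, hz'⟩ := layer_reach IH S a0 ha0good hz hz'
    exact r.trans (rmid.trans r'.symm)

end HamAux


/-- the Cartesian product of `r-1` copies of `K_q` is
`(r-1)(q-1)`-regular and `(r-1)(q-1)`-connected. -/
theorem hammingGraph_regular_and_connected (q r : ℕ) (hq : 2 ≤ q) (hr : 2 ≤ r) :
    (∀ v : Fin (r-1) → Fin q,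
        {w | (hammingGraph (r-1) q).Adj v w}.ncard = (r-1) * (q-1)) ∧
      GraphKConnected (hammingGraph (r-1) q) ((r-1) * (q-1)) := by
  set N := r - 1 with hN_def
  have hN : 1 ≤ N := by omega
  constructor
  · exact fun v => ham_deg (by omega) v
  · constructor
    · -- N * (q-1) < q ^ N
      rw [HamAux.card_V]
      have h1 : N * q ≤ q ^ N := HamAux.arith_mul_le_pow hq hN
      have h2 : N * q = N * (q-1) + N := by
        have hq' : q - 1 + 1 = q := by omega
        calc N * q = N * ((q-1)+1) := by rw [hq']
          _ = N * (q-1) + N := by ring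
      omega
    · intro S _ hS
      rw [SimpleGraph.connected_iff]
      have hlt : S.ncard < Nat.card (Fin N → Fin q) := by
        rw [HamAux.card_V]
        have h1 : N * q ≤ q ^ N := HamAux.arith_mul_le_pow hq hN
        have h2 : N * q = N * (q-1) + N := by
          have hq' : q - 1 + 1 = q := by omega
          calc N * q = N * ((q-1)+1) := by rw [hq']
            _ = N * (q-1) + N := by ring
        omega
      obtain ⟨x, hx⟩ := HamAux.compl_nonempty hlt
      exact ⟨fun u v => HamAux.main_reach q hq N hN S hS u v, ⟨⟨x, hx⟩⟩⟩
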